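/- Let K ⊂ ℝ^d be a polytope with faces F ∈ F_h(K), n_K faces in total, such that |F| ≲ h_F^{d-1} for each face. Then Σ_{F} (|F|/h_F)^{1/2} ≲ n_K^{d/(2(d-1))} |∂K|^{(d-2)/(2(d-1))}, and consequently, using the isoperimetric inequality |K| ≤ C_d |∂K|^{d/(d-1)}, the quantity (|K|^{1/2}/|∂K|) Σ_F (|F|/h_F)^{1/2} is bounded by a constant depending only on n_K and d. -/

import Mathlib

open MeasureTheory Finset

lemma sum_rpow_le_card_rpow_mul (s : Finset ℕ) (a : ℕ → ℝ) (ha : ∀ i ∈ s, 0 ≤ a i)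
    {q : ℝ} (hq0 : 0 ≤ q) (hq1 : q ≤ 1) :
    ∑ i ∈ s, a i ^ q ≤ (s.card : ℝ) ^ (1 - q) * (∑ i ∈ s, a i) ^ q := by
  rcases eq_or_lt_of_le hq0 with hq | hq
  · simp [← hq]
  · set a' : ℕ → ℝ := fun i => max (a i) 0 with ha'
    have hs1 : ∑ i ∈ s, a i ^ q = ∑ i ∈ s, a' i ^ q :=
      Finset.sum_congr rfl fun i hi => by rw [ha']; simp [max_eq_left (ha i hi)]
    have hs2 : ∑ i ∈ s, a i = ∑ i ∈ s, a' i :=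
      Finset.sum_congr rfl fun i hi => by rw [ha']; simp [max_eq_left (ha i hi)]
    rw [hs1, hs2]
    have hp : (1:ℝ) ≤ q⁻¹ := one_le_inv₀ hq |>.2 hq1
    have key := Real.inner_le_weight_mul_Lp_of_nonneg s hp (fun _ => 1) (fun i => a' i ^ q)
      (fun _ => zero_le_one) (fun i => Real.rpow_nonneg (le_max_right _ _) q)
    simp only [one_mul, inv_inv] at key
    have hrw : ∑ i ∈ s, (a' i ^ q) ^ q⁻¹ = ∑ i ∈ s, a' i :=
      Finset.sum_congr rfl fun i _ => by
        rw [← Real.rpow_mul (le_max_right _ _), mul_inv_cancel₀ (ne_of_gt hq), Real.rpow_one]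
    rw [hrw] at key
    calc ∑ i ∈ s, a' i ^ q ≤ (∑ _i ∈ s, (1:ℝ)) ^ (1 - q) * (∑ i ∈ s, a' i) ^ q := key
      _ = (s.card : ℝ) ^ (1 - q) * (∑ i ∈ s, a' i) ^ q := by
          simp [Finset.sum_const]

lemma term_bound {d : ℕ} (hd : 2 ≤ d) {c a h : ℝ} (hc : 0 < c) (hh : 0 < h) (ha : 0 ≤ a)
    (hah : a ≤ c * h ^ (d - 1)) :
    Real.sqrt (a / h) ≤ c ^ (1 / (2 * ((d:ℝ) - 1))) * a ^ (((d:ℝ) - 2) / (2 * ((d:ℝ) - 1))) := by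
  have hd1 : (1:ℝ) ≤ (d:ℝ) - 1 := by
    have : (2:ℝ) ≤ (d:ℝ) := by exact_mod_cast hd
    linarith
  have he : (0:ℝ) < (d:ℝ) - 1 := by linarith
  set e : ℝ := (d:ℝ) - 1 with hedef
  have hcast : c * h ^ (d - 1) = c * h ^ e := by
    rw [← Real.rpow_natCast h (d-1)]
    congr 1
    push_cast [Nat.cast_sub (le_trans one_le_two hd)]
    ring_nf
    rw [hedef]; ring_nf
  rw [hcast] at hah
  have key : a / h ≤ c ^ (1/e) * a ^ (((d:ℝ) - 2) / e) := by
    rcases eq_or_lt_of_le ha with ha0 | ha0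
    · rw [← ha0]
      simp only [zero_div]
      positivity
    · rw [div_le_iff₀ hh]
      have h1 : a ^ (1/e) ≤ c ^ (1/e) * h := by
        calc a ^ (1/e) ≤ (c * h ^ e) ^ (1/e) :=
              Real.rpow_le_rpow ha hah (by positivity)
          _ = c ^ (1/e) * h := by
              rw [Real.mul_rpow hc.le (by positivity), ← Real.rpow_mul hh.le,
                mul_one_div, div_self he.ne', Real.rpow_one]
      have h2 : a = a ^ (1/e) * a ^ (((d:ℝ) - 2) / e) := by
        rw [← Real.rpow_add ha0]
        rw [show 1/e + ((d:ℝ)-2)/e = 1 by field_simp; ring, Real.rpow_one]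
      calc a = a ^ (1/e) * a ^ (((d:ℝ) - 2) / e) := h2
        _ ≤ (c ^ (1/e) * h) * a ^ (((d:ℝ) - 2) / e) :=
            mul_le_mul_of_nonneg_right h1 (Real.rpow_nonneg ha _)
        _ = c ^ (1/e) * a ^ (((d:ℝ) - 2) / e) * h := by ring
  calc Real.sqrt (a / h) ≤ Real.sqrt (c ^ (1/e) * a ^ (((d:ℝ) - 2) / e)) :=
        Real.sqrt_le_sqrt key
    _ = c ^ (1 / (2 * e)) * a ^ (((d:ℝ) - 2) / (2 * e)) := by
        rw [Real.sqrt_eq_rpow,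
          Real.mul_rpow (by positivity) (Real.rpow_nonneg ha _),
          ← Real.rpow_mul hc.le, ← Real.rpow_mul ha]
        rw [show 1/e * (1/2) = 1/(2*e) by rw [div_mul_div_comm, one_mul, mul_comm],
          show ((d:ℝ)-2)/e * (1/2) = ((d:ℝ)-2)/(2*e) by
            rw [div_mul_div_comm, mul_one, mul_comm e 2]]

/-- combinatorial face-sum estimate. For a polytope with faces of
areas `a i` and diameters `h i` (`i ∈ s`, `s.card ≤ n`), satisfying
`a i ≤ c * h i ^ (d-1)`, one has
`Σ_i √(a i / h i) ≤ C n^{d/(2(d-1))} (Σ a)^{(d-2)/(2(d-1))}`, and, with the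
isoperimetric inequality `vol ≤ Cd (Σ a)^{d/(d-1)}`, the quantity
`(vol^{1/2}/Σ a) · Σ_i √(a i / h i)` is bounded by a constant depending only on
`n`, `d` (and `c`, `Cd`). -/
theorem stmt_9 (d n : ℕ) (hd : 2 ≤ d) (c Cd : ℝ) (hc : 0 < c) (hCd : 0 < Cd) :
    ∃ C > (0 : ℝ),
      ∀ (s : Finset ℕ) (a h : ℕ → ℝ) (vol : ℝ),
        s.card ≤ n → (∀ i ∈ s, 0 < h i) → (∀ i ∈ s, 0 ≤ a i) →
        (∀ i ∈ s, a i ≤ c * h i ^ (d - 1)) →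
        (∑ i ∈ s, Real.sqrt (a i / h i) ≤
            C * (n : ℝ) ^ ((d : ℝ) / (2 * ((d : ℝ) - 1))) *
              (∑ i ∈ s, a i) ^ (((d : ℝ) - 2) / (2 * ((d : ℝ) - 1)))) ∧
        (0 ≤ vol → vol ≤ Cd * (∑ i ∈ s, a i) ^ ((d : ℝ) / ((d : ℝ) - 1)) →
          0 < ∑ i ∈ s, a i →
          Real.sqrt vol / (∑ i ∈ s, a i) * ∑ i ∈ s, Real.sqrt (a i / h i) ≤ C) := by
  have hd2 : (2:ℝ) ≤ (d:ℝ) := by exact_mod_cast hd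
  have he : (0:ℝ) < (d:ℝ) - 1 := by linarith
  set p : ℝ := (d : ℝ) / (2 * ((d : ℝ) - 1)) with hpdef
  set q : ℝ := ((d : ℝ) - 2) / (2 * ((d : ℝ) - 1)) with hqdef
  have hq0 : 0 ≤ q := by apply div_nonneg <;> linarith
  have hq1 : q ≤ 1 := by
    rw [hqdef, div_le_one (by linarith)]; linarith
  have hp0 : 0 ≤ p := by apply div_nonneg <;> linarith
  have h1q : 1 - q = p := by
    rw [hpdef, hqdef]; field_simp; ring
  have hpq : p + q = 1 := by linarith
  set C1 : ℝ := c ^ (1 / (2 * ((d:ℝ) - 1))) with hC1def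
  have hC1 : 0 < C1 := Real.rpow_pos_of_pos hc _
  set X : ℝ := (n:ℝ) ^ p with hXdef
  have hX : 0 ≤ X := Real.rpow_nonneg (Nat.cast_nonneg n) p
  have hY : 0 ≤ Real.sqrt Cd := Real.sqrt_nonneg _
  refine ⟨(C1 + 1) * (1 + X * Real.sqrt Cd), by positivity, ?_⟩
  intro s a h vol hcard hh ha hah
  set S : ℝ := ∑ i ∈ s, a i with hSdef
  have hS0 : 0 ≤ S := Finset.sum_nonneg ha
  have hmain : ∑ i ∈ s, Real.sqrt (a i / h i) ≤ C1 * (X * S ^ q) := by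
    calc ∑ i ∈ s, Real.sqrt (a i / h i)
        ≤ ∑ i ∈ s, C1 * a i ^ q := Finset.sum_le_sum fun i hi =>
          term_bound hd hc (hh i hi) (ha i hi) (hah i hi)
      _ = C1 * ∑ i ∈ s, a i ^ q := by rw [Finset.mul_sum]
      _ ≤ C1 * ((s.card : ℝ) ^ (1 - q) * S ^ q) :=
          mul_le_mul_of_nonneg_left (sum_rpow_le_card_rpow_mul s a ha hq0 hq1) hC1.le
      _ ≤ C1 * (X * S ^ q) := by
          apply mul_le_mul_of_nonneg_left _ hC1.le
          apply mul_le_mul_of_nonneg_right _ (Real.rpow_nonneg hS0 q)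
          rw [h1q, hXdef]
          exact Real.rpow_le_rpow (Nat.cast_nonneg _) (by exact_mod_cast hcard) hp0
  constructor
  · calc ∑ i ∈ s, Real.sqrt (a i / h i) ≤ C1 * (X * S ^ q) := hmain
      _ ≤ ((C1 + 1) * (1 + X * Real.sqrt Cd)) * (X * S ^ q) := by
          apply mul_le_mul_of_nonneg_right _ (by positivity)
          nlinarith [mul_nonneg hX hY, hC1.le]
      _ = (C1 + 1) * (1 + X * Real.sqrt Cd) * X * S ^ q := by ring
  · intro hvol0 hvol hS
    have hsqrtS : Real.sqrt vol ≤ Real.sqrt Cd * S ^ p := by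
      calc Real.sqrt vol ≤ Real.sqrt (Cd * S ^ ((d:ℝ) / ((d:ℝ) - 1))) :=
            Real.sqrt_le_sqrt hvol
        _ = Real.sqrt Cd * S ^ p := by
            rw [Real.sqrt_mul hCd.le, Real.sqrt_eq_rpow (S ^ _),
              ← Real.rpow_mul hS0]
            congr 2
            rw [hpdef, div_mul_div_comm, mul_one, mul_comm ((d:ℝ)-1) 2]
    have hT : 0 ≤ ∑ i ∈ s, Real.sqrt (a i / h i) :=
      Finset.sum_nonneg fun i _ => Real.sqrt_nonneg _
    have hstep : Real.sqrt vol / S * ∑ i ∈ s, Real.sqrt (a i / h i)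
        ≤ (Real.sqrt Cd * S ^ p / S) * (C1 * (X * S ^ q)) := by
      apply mul_le_mul _ hmain hT (by positivity)
      gcongr
    have hSS : S ^ p * S ^ q = S := by
      rw [← Real.rpow_add hS, hpq, Real.rpow_one]
    have heq : (Real.sqrt Cd * S ^ p / S) * (C1 * (X * S ^ q))
        = Real.sqrt Cd * C1 * X * (S ^ p * S ^ q) / S := by ring
    calc Real.sqrt vol / S * ∑ i ∈ s, Real.sqrt (a i / h i)
        ≤ (Real.sqrt Cd * S ^ p / S) * (C1 * (X * S ^ q)) := hstep
      _ = Real.sqrt Cd * C1 * X * (S ^ p * S ^ q) / S := heq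
      _ = Real.sqrt Cd * C1 * X := by
          rw [hSS, mul_div_assoc, div_self hS.ne', mul_one]
      _ ≤ (C1 + 1) * (1 + X * Real.sqrt Cd) := by nlinarith
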